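/- Let n, K, d, q, s be natural numbers with 1 ≤ s < q. If there exists a code C ⊆ (Fin n → Fin q) with |C| = K such that any two distinct codewords are at Hamming distance at least d, then there exists a code C′ ⊆ (Fin n → Fin s) such that any two distinct codewords of C′ are at Hamming distance at least d and |C′| · q^n ≥ K · s^n (i.e. |C′| ≥ K·(s/q)^n). -/

import Mathlib

/-- **Codes over a smaller alphabet (Dumer, Lemma 3.1).**
If there is an `(n, K, d)_q` code, then for any `1 ≤ s < q` there is a length-`n` code over an
alphabet of size `s` with minimum distance at least `d` and at least `K·(s/q)^n` codewords,
i.e. `|C'| · q^n ≥ K · s^n`. -/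
theorem code_over_subalphabet
    (n K d q s : ℕ) (hs : 1 ≤ s) (hsq : s < q)
    (C : Set (Fin n → Fin q)) (hK : Nat.card C = K)
    (hd : ∀ x ∈ C, ∀ y ∈ C, x ≠ y → d ≤ hammingDist x y) :
    ∃ C' : Set (Fin n → Fin s),
      (∀ x ∈ C', ∀ y ∈ C', x ≠ y → d ≤ hammingDist x y) ∧
      K * s ^ n ≤ Nat.card C' * q ^ n := by
  haveI : NeZero q := ⟨by omega⟩
  haveI : NeZero s := ⟨by omega⟩
  by_cases hfin : C.Finite
  · haveI : Fintype C := hfin.fintype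
    set T : Finset (Fin n → Fin q) := C.toFinset with hT
    have hTcard : T.card = K := by
      rw [← hK, Nat.card_eq_fintype_card, Set.toFinset_card]
    -- per-coordinate count
    have hcoord : ∀ a : Fin q,
        (Finset.univ.filter fun w : Fin q => (a + w).val < s).card = s := by
      intro a
      have : (Finset.univ.filter fun w : Fin q => (a + w).val < s)
          = (Finset.univ.filter fun u : Fin q => u.val < s).image (fun u => -a + u) := by
        ext w
        simp only [Finset.mem_filter, Finset.mem_image, Finset.mem_univ, true_and]
        constructor
        · intro h
          exact ⟨a + w, h, neg_add_cancel_left a w⟩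
        · rintro ⟨u, hu, rfl⟩
          simpa using hu
      rw [this, Finset.card_image_of_injective _ (add_right_injective (-a))]
      have : (Finset.univ.filter fun u : Fin q => u.val < s) = Finset.Iio (⟨s, hsq⟩ : Fin q) := by
        ext u
        simp [Fin.lt_def]
      rw [this, Fin.card_Iio]
    -- double counting
    have hsum : ∑ v : Fin n → Fin q,
        (T.filter fun x => ∀ i, (x i + v i).val < s).card = K * s ^ n := by
      have swap : ∑ v : Fin n → Fin q,
          (T.filter fun x => ∀ i, (x i + v i).val < s).card
          = ∑ x ∈ T, (Finset.univ.filter fun v : Fin n → Fin q =>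
              ∀ i, (x i + v i).val < s).card := by
        simp only [Finset.card_filter]
        exact Finset.sum_comm
      rw [swap]
      have hx : ∀ x : Fin n → Fin q,
          (Finset.univ.filter fun v : Fin n → Fin q => ∀ i, (x i + v i).val < s).card
            = s ^ n := by
        intro x
        have : (Finset.univ.filter fun v : Fin n → Fin q => ∀ i, (x i + v i).val < s)
            = Fintype.piFinset (fun i => Finset.univ.filter fun w => (x i + w).val < s) := by
          ext v
          simp [Fintype.mem_piFinset]
        rw [this, Fintype.card_piFinset]
        simp [hcoord]
      rw [Finset.sum_congr rfl (fun x _ => hx x), Finset.sum_const, hTcard, smul_eq_mul]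
    -- pigeonhole
    obtain ⟨v, -, hv⟩ := Finset.exists_max_image (Finset.univ : Finset (Fin n → Fin q))
      (fun v => (T.filter fun x => ∀ i, (x i + v i).val < s).card)
      ⟨fun _ => 0, Finset.mem_univ _⟩
    set A := T.filter fun x => ∀ i, (x i + v i).val < s with hA
    have hmain : K * s ^ n ≤ A.card * q ^ n := by
      calc K * s ^ n = ∑ w : Fin n → Fin q,
            (T.filter fun x => ∀ i, (x i + w i).val < s).card := hsum.symm
        _ ≤ ∑ _w : Fin n → Fin q, A.card :=
            Finset.sum_le_sum fun w _ => hv w (Finset.mem_univ w)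
        _ = A.card * q ^ n := by
            simp [Finset.sum_const, Fintype.card_fun, mul_comm]
    -- define the projection
    classical
    set g : (Fin n → Fin q) → (Fin n → Fin s) := fun x i =>
      if h : (x i + v i).val < s then ⟨(x i + v i).val, h⟩ else ⟨0, hs⟩ with hg
    have key : ∀ x ∈ A, ∀ y ∈ A, ∀ i, g x i = g y i ↔ x i = y i := by
      intro x hx y hy i
      obtain ⟨-, hx2⟩ := Finset.mem_filter.mp hx
      obtain ⟨-, hy2⟩ := Finset.mem_filter.mp hy
      rw [hg]
      simp only [dif_pos (hx2 i), dif_pos (hy2 i)]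
      rw [Fin.mk_eq_mk]
      constructor
      · intro h
        exact add_right_cancel (Fin.val_injective h)
      · intro h; rw [h]
    have hdist : ∀ x ∈ A, ∀ y ∈ A, hammingDist (g x) (g y) = hammingDist x y := by
      intro x hx y hy
      unfold hammingDist
      congr 1
      ext i
      simp only [Finset.mem_filter, Finset.mem_univ, true_and]
      exact not_congr (key x hx y hy i)
    have hinj : Set.InjOn g A := by
      intro x hx y hy h
      funext i
      exact (key x hx y hy i).mp (congrFun h i)
    refine ⟨g '' ↑A, ?_, ?_⟩
    · rintro a ha b hb hab
      simp only [Set.mem_image, Finset.mem_coe] at ha hb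
      obtain ⟨x, hx, rfl⟩ := ha
      obtain ⟨y, hy, rfl⟩ := hb
      have hxy : x ≠ y := fun h => hab (by rw [h])
      have hxC : x ∈ C := Set.mem_toFinset.mp (Finset.mem_filter.mp hx).1
      have hyC : y ∈ C := Set.mem_toFinset.mp (Finset.mem_filter.mp hy).1
      calc d ≤ hammingDist x y := hd x hxC y hyC hxy
        _ = hammingDist (g x) (g y) := (hdist x hx y hy).symm
    · have : Nat.card ↑(g '' (A : Set (Fin n → Fin q))) = A.card := by
        rw [Nat.card_coe_set_eq, Set.ncard_image_of_injOn hinj, Set.ncard_coe_finset]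
      rw [this]
      exact hmain
  · have : K = 0 := by
      rw [← hK, Nat.card_eq_zero]
      right
      exact Set.infinite_coe_iff.mpr hfin
    exact ⟨∅, by simp, by simp [this]⟩
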